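/- Let X be a T1 topological space and let f : 𝕊 → X be a continuous open surjection from the Sorgenfrey line onto X whose weight is uncountable (X is not second countable). For rationals a < b, let P_{a,b} := { x ∈ [a, b) : for all y ∈ [a, b), f(y) = f(x) implies y = x }. Then there exist rationals a < b such that P_{a,b} is uncountable. -/

import Mathlib

open Set Filter Topology Function

/-- The Sorgenfrey line: the real line as a type synonym. -/
def SorgenfreyLine : Type := ℝ

notation "𝕊" => SorgenfreyLine

noncomputable instance : LinearOrder 𝕊 := inferInstanceAs (LinearOrder ℝ)
instance : RatCast 𝕊 := inferInstanceAs (RatCast ℝ)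

/-- The topology on the Sorgenfrey line, generated by half-open intervals `[a, b)`, `a < b`. -/
instance : TopologicalSpace 𝕊 :=
  TopologicalSpace.generateFrom {s : Set 𝕊 | ∃ a b : 𝕊, a < b ∧ s = Set.Ico a b}

/-- `Pab f a b` is the set of points `x ∈ [a, b)` that are the unique point of `[a, b)`
mapped by `f` to `f x`. -/
def Pab {X : Type*} (f : 𝕊 → X) (a b : 𝕊) : Set 𝕊 :=
  {x | x ∈ Set.Ico a b ∧ ∀ y ∈ Set.Ico a b, f y = f x → y = x}

/-! ### Auxiliary lemmas -/

/-- Identity map from `ℝ` to the Sorgenfrey line. -/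
def toS (x : ℝ) : 𝕊 := x

lemma sorgenfrey_isOpen_Ico (a b : 𝕊) : IsOpen (Set.Ico a b) := by
  rcases lt_or_ge a b with h | h
  · exact TopologicalSpace.GenerateOpen.basic _ ⟨a, b, h, rfl⟩
  · rw [Set.Ico_eq_empty (not_lt.2 h)]
    exact isOpen_empty

lemma sorgenfrey_nhds {U : Set 𝕊} (hU : IsOpen U) :
    ∀ x ∈ U, ∃ b : 𝕊, x < b ∧ Set.Ico x b ⊆ U := by
  have hU' : TopologicalSpace.GenerateOpen
      {s : Set 𝕊 | ∃ a b : 𝕊, a < b ∧ s = Set.Ico a b} U := hU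
  clear hU
  induction hU' with
  | basic s hs =>
    obtain ⟨a, b, hab, rfl⟩ := hs
    intro x hx
    exact ⟨b, hx.2, fun y hy => ⟨le_trans hx.1 hy.1, hy.2⟩⟩
  | univ =>
    intro x _
    obtain ⟨b, hb⟩ := exists_gt (α := ℝ) x
    exact ⟨b, hb, fun y _ => Set.mem_univ y⟩
  | inter s t _ _ ihs iht =>
    intro x hx
    obtain ⟨b₁, hb₁, hs₁⟩ := ihs x hx.1
    obtain ⟨b₂, hb₂, hs₂⟩ := iht x hx.2
    refine ⟨min b₁ b₂, lt_min hb₁ hb₂, fun y hy => ?_⟩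
    exact ⟨hs₁ ⟨hy.1, lt_of_lt_of_le hy.2 (min_le_left _ _)⟩,
      hs₂ ⟨hy.1, lt_of_lt_of_le hy.2 (min_le_right _ _)⟩⟩
  | sUnion S _ ih =>
    intro x hx
    obtain ⟨s, hsS, hxs⟩ := hx
    obtain ⟨b, hb, hsub⟩ := ih s hsS x hxs
    exact ⟨b, hb, hsub.trans (Set.subset_sUnion_of_mem hsS)⟩

lemma cantor_space_uncountable : ¬ Countable (ℕ → Bool) := by
  intro h
  have h2 : Countable (Set ℕ) :=
    Countable.of_equiv (ℕ → Bool)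
      (Equiv.arrowCongr (Equiv.refl ℕ) Equiv.propEquivBool.symm)
  obtain ⟨g, hg⟩ := Countable.exists_injective_nat (Set ℕ)
  exact Function.cantor_injective g hg

/-- A nonempty subset of `ℝ`, all of whose points are accumulation points, and which is
closed in the Sorgenfrey sense, contains a right-limit point of itself. -/
lemma exists_right_limit (F : Set ℝ) (hne : F.Nonempty)
    (hacc : ∀ x ∈ F, ∀ a < x, ∀ b, x < b → ∃ y ∈ F, y ≠ x ∧ a < y ∧ y < b)
    (hcl : ∀ z : ℝ, z ∉ F → ∃ w, z < w ∧ Set.Ico z w ∩ F = ∅) :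
    ∃ z ∈ F, ∀ w, z < w → (Set.Ioo z w ∩ F).Nonempty := by
  -- F is preperfect
  have hPre : Preperfect F := by
    intro x hx
    rw [accPt_iff_nhds]
    intro U hU
    obtain ⟨ε, hε, hball⟩ := Metric.mem_nhds_iff.1 hU
    obtain ⟨y, hyF, hyne, hya, hyb⟩ := hacc x hx (x - ε) (by linarith) (x + ε) (by linarith)
    refine ⟨y, ⟨hball ?_, hyF⟩, hyne⟩
    rw [Metric.mem_ball, Real.dist_eq, abs_sub_lt_iff]
    constructor <;> linarith
  have hK : Perfect (closure F) := hPre.perfect_closure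
  -- closure F is uncountable
  have hKunc : ¬ (closure F).Countable := by
    intro hc
    obtain ⟨g, hgr, -, hginj⟩ := hK.exists_nat_bool_injection hne.closure
    have : Countable (ℕ → Bool) := by
      haveI := hc.to_subtype
      exact Function.Injective.countable
        (f := fun t : ℕ → Bool => (⟨g t, hgr (Set.mem_range_self t)⟩ : closure F))
        (fun t₁ t₂ h => hginj (congrArg Subtype.val h))
    exact cantor_space_uncountable this
  -- the set of "non right-limit" points meets the closure countably
  set N : Set ℝ := {y | ∃ q : ℚ, y < (q : ℝ) ∧ Set.Ioo y (q : ℝ) ∩ F = ∅} with hN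
  have hNK : (closure F ∩ N).Countable := by
    have hsub : closure F ∩ N ⊆
        ⋃ q : ℚ, {y : ℝ | y ∈ closure F ∧ y < (q : ℝ) ∧ Set.Ioo y (q : ℝ) ∩ F = ∅} := by
      rintro y ⟨hyK, q, hq1, hq2⟩
      exact Set.mem_iUnion.2 ⟨q, hyK, hq1, hq2⟩
    refine Set.Countable.mono hsub (Set.countable_iUnion fun q => Set.Subsingleton.countable ?_)
    intro y₁ hy₁ y₂ hy₂
    by_contra hne'
    have key : ∀ u v : ℝ, u ∈ closure F → u < (q:ℝ) → v ∈ closure F →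
        Set.Ioo v (q:ℝ) ∩ F = ∅ → v < u → False := by
      intro u v huK huq hvK hvemp hvu
      have hFc : F ⊆ (Set.Ioo v (q:ℝ))ᶜ := fun t htF htI =>
        Set.eq_empty_iff_forall_notMem.1 hvemp t ⟨htI, htF⟩
      have : closure F ⊆ (Set.Ioo v (q:ℝ))ᶜ :=
        closure_minimal hFc isOpen_Ioo.isClosed_compl
      exact this huK ⟨hvu, huq⟩
    rcases lt_or_gt_of_ne hne' with h | h
    · exact key y₂ y₁ hy₂.1 hy₂.2.1 hy₁.1 hy₁.2.2 h
    · exact key y₁ y₂ hy₁.1 hy₁.2.1 hy₂.1 hy₂.2.2 h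
  -- pick a point of the closure not in N
  have hex : ∃ z ∈ closure F, z ∉ N := by
    by_contra hcon
    push_neg at hcon
    exact hKunc (by
      have : closure F ⊆ closure F ∩ N := fun z hz => ⟨hz, hcon z hz⟩
      exact hNK.mono this)
  obtain ⟨z, hzK, hzN⟩ := hex
  -- z is in F
  have hzF : z ∈ F := by
    by_contra hzF
    obtain ⟨w, hzw, hw⟩ := hcl z hzF
    obtain ⟨q, hq1, hq2⟩ := exists_rat_btwn hzw
    refine hzN ⟨q, hq1, ?_⟩
    apply Set.eq_empty_iff_forall_notMem.2
    intro t ⟨htI, htF⟩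
    exact Set.eq_empty_iff_forall_notMem.1 hw t ⟨⟨le_of_lt htI.1, lt_trans htI.2 hq2⟩, htF⟩
  refine ⟨z, hzF, fun w hzw => ?_⟩
  by_contra hcon
  rw [Set.not_nonempty_iff_eq_empty] at hcon
  obtain ⟨q, hq1, hq2⟩ := exists_rat_btwn hzw
  refine hzN ⟨q, hq1, ?_⟩
  apply Set.eq_empty_iff_forall_notMem.2
  intro t ⟨htI, htF⟩
  exact Set.eq_empty_iff_forall_notMem.1 hcon t ⟨⟨htI.1, lt_trans htI.2 hq2⟩, htF⟩

/-- If `f` is a continuous open surjection from the Sorgenfrey line onto a T1 space whose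
weight is uncountable (not second countable), then `P_{a,b}` is uncountable for some rationals
`a < b`. -/
theorem stmt9 {X : Type} [TopologicalSpace X] [T1Space X] (f : 𝕊 → X)
    (hf : Continuous f) (hopen : IsOpenMap f) (hsurj : Surjective f)
    (hw : ¬ SecondCountableTopology X) :
    ∃ a b : ℚ, a < b ∧ ¬ (Pab f (a : 𝕊) (b : 𝕊)).Countable := by
  by_contra hcon
  push_neg at hcon
  apply hw
  -- the union of all the Pab sets is countable
  set D : Set 𝕊 := ⋃ (a : ℚ) (b : ℚ), Pab f (a : 𝕊) (b : 𝕊) with hD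
  have hDc : D.Countable := by
    refine Set.countable_iUnion fun a => Set.countable_iUnion fun b => ?_
    rcases lt_or_ge a b with hab | hab
    · exact hcon a b hab
    · have hba : ((b : ℚ) : ℝ) ≤ ((a : ℚ) : ℝ) := Rat.cast_le.mpr hab
      have hsub : Pab f (a : 𝕊) (b : 𝕊) ⊆ (∅ : Set 𝕊) := by
        intro x hx
        exact absurd (lt_of_le_of_lt hx.1.1 hx.1.2) (not_lt.2 hba)
      exact Set.Countable.mono hsub Set.countable_empty
  set C : Set 𝕊 := D ∪ Set.range (fun q : ℚ => (q : 𝕊)) with hC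
  have hCc : C.Countable := hDc.union (Set.countable_range _)
  -- the candidate basis
  set B : Set (Set X) :=
    (fun p : 𝕊 × ℚ => f '' Set.Ico p.1 ((p.2 : 𝕊))) '' (C ×ˢ (Set.univ : Set ℚ)) with hB
  have hBc : B.Countable := (hCc.prod Set.countable_univ).image _
  have hBopen : ∀ v ∈ B, IsOpen v := by
    rintro v ⟨⟨c, q⟩, -, rfl⟩
    exact hopen _ (sorgenfrey_isOpen_Ico _ _)
  have hBnhds : ∀ p U, p ∈ U → IsOpen U → ∃ v ∈ B, p ∈ v ∧ v ⊆ U := by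
    intro p U hpU hUopen
    have hpre : IsOpen (f ⁻¹' U) := hUopen.preimage hf
    by_cases hz : ∃ z ∈ D, f z = p
    · -- some point of D is in the fiber of p
      obtain ⟨z, hzD, hzp⟩ := hz
      have hzU : z ∈ f ⁻¹' U := by
        show f z ∈ U
        rw [hzp]; exact hpU
      obtain ⟨b, hzb, hsub⟩ := sorgenfrey_nhds hpre z hzU
      obtain ⟨q, hq1, hq2⟩ := exists_rat_btwn (K := ℝ) hzb
      refine ⟨f '' Set.Ico z ((q : 𝕊)), ⟨(z, q), ⟨Or.inl hzD, trivial⟩, rfl⟩, ?_, ?_⟩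
      · exact ⟨z, ⟨le_refl z, hq1⟩, hzp⟩
      · rintro x ⟨y, hy, rfl⟩
        exact hsub ⟨hy.1, lt_of_lt_of_le hy.2 (le_of_lt hq2)⟩
    · -- the fiber of p misses D
      push_neg at hz
      obtain ⟨x₀, hx₀⟩ := hsurj p
      -- apply the right-limit lemma to the fiber
      have key := exists_right_limit (show Set ℝ from f ⁻¹' {p})
      obtain ⟨z, hzF, hzright⟩ := key ⟨x₀, by exact hx₀⟩
        (by
          -- every fiber point is an accumulation point
          intro x hx a ha b hb
          have hxD : x ∉ D := fun hmem => hz x hmem hx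
          obtain ⟨qa, hqa1, hqa2⟩ := exists_rat_btwn (K := ℝ) ha
          obtain ⟨qb, hqb1, hqb2⟩ := exists_rat_btwn (K := ℝ) hb
          have hxIco : toS x ∈ Set.Ico ((qa : 𝕊)) ((qb : 𝕊)) := ⟨le_of_lt hqa2, hqb1⟩
          have hxPab : toS x ∉ Pab f ((qa : 𝕊)) ((qb : 𝕊)) := by
            intro hmem
            exact hxD (Set.mem_iUnion.2 ⟨qa, Set.mem_iUnion.2 ⟨qb, hmem⟩⟩)
          have : ¬ ∀ y ∈ Set.Ico ((qa : 𝕊)) ((qb : 𝕊)), f y = f (toS x) → y = toS x :=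
            fun h => hxPab ⟨hxIco, h⟩
          push_neg at this
          obtain ⟨y, hyIco, hyfx, hyne⟩ := this
          have hyF : f y = p := by rw [hyfx]; exact hx
          exact ⟨y, hyF, hyne, lt_of_lt_of_le hqa1 hyIco.1, lt_trans hyIco.2 hqb2⟩)
        (by
          -- Sorgenfrey-closedness of the fiber
          intro w hw
          have hwopen : IsOpen (f ⁻¹' ({p}ᶜ)) := isOpen_compl_singleton.preimage hf
          have hwmem : w ∈ f ⁻¹' ({p}ᶜ) := hw
          obtain ⟨b, hwb, hsub⟩ := sorgenfrey_nhds hwopen w hwmem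
          refine ⟨b, hwb, Set.eq_empty_iff_forall_notMem.2 ?_⟩
          intro t ⟨htI, htF⟩
          exact hsub ⟨htI.1, htI.2⟩ htF)
      -- now build the basic open set
      have hzp : f z = p := hzF
      have hzU : z ∈ f ⁻¹' U := by show f z ∈ U; rw [hzp]; exact hpU
      obtain ⟨b, hzb, hsub⟩ := sorgenfrey_nhds hpre z hzU
      obtain ⟨y, ⟨hy1, hy2⟩, hyF⟩ := hzright b hzb
      obtain ⟨q₁, hq₁1, hq₁2⟩ := exists_rat_btwn hy1
      obtain ⟨q₂, hq₂1, hq₂2⟩ := exists_rat_btwn hy2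
      refine ⟨f '' Set.Ico ((q₁ : 𝕊)) ((q₂ : 𝕊)),
        ⟨((q₁ : 𝕊), q₂), ⟨Or.inr ⟨q₁, rfl⟩, trivial⟩, rfl⟩, ?_, ?_⟩
      · exact ⟨y, ⟨le_of_lt hq₁2, hq₂1⟩, hyF⟩
      · rintro x ⟨t, ht, rfl⟩
        exact hsub ⟨le_trans (le_of_lt hq₁1) ht.1, lt_of_lt_of_le ht.2 (le_of_lt hq₂2)⟩
  exact (TopologicalSpace.isTopologicalBasis_of_isOpen_of_nhds hBopen hBnhds).secondCountableTopology hBc
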